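/- arXiv:1608.04455 — 5 statements merged into one kernel-verified Lean document; each statement's English description precedes it below -/
import Mathlib

section
/- Fix real numbers t and z with z > 0 and a real d ≥ 1. The function g(c) := (1/2)((t+c)² + z²)^(d/2) + (1/2)((-t+c)² + z²)^(d/2) is strictly convex on ℝ. -/
open Real Set

lemma aux_strict (s z d : ℝ) (hz : 0 < z) (hd : 1 ≤ d) :
    StrictConvexOn ℝ Set.univ
      (fun c : ℝ => (1 / 2) * ((s + c) ^ 2 + z ^ 2) ^ (d / 2)) := by
  have hq : ∀ c : ℝ, 0 < (s + c) ^ 2 + z ^ 2 := fun c => by positivity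
  have hqd : ∀ c : ℝ, HasDerivAt (fun c : ℝ => (s + c) ^ 2 + z ^ 2) (2 * (s + c)) c := by
    intro c
    have h1 : HasDerivAt (fun c : ℝ => s + c) 1 c := (hasDerivAt_id c).const_add s
    have h2 := (h1.pow 2).add_const (z ^ 2)
    simpa using h2
  have hderiv1 : ∀ c : ℝ,
      HasDerivAt (fun c : ℝ => (1 / 2) * ((s + c) ^ 2 + z ^ 2) ^ (d / 2))
        ((1 / 2) * (2 * (s + c) * (d / 2) * ((s + c) ^ 2 + z ^ 2) ^ (d / 2 - 1))) c := by
    intro c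
    exact ((hqd c).rpow_const (Or.inl (hq c).ne')).const_mul (1 / 2)
  have hderiv2 : ∀ c : ℝ,
      HasDerivAt (fun c : ℝ =>
          (1 / 2) * (2 * (s + c) * (d / 2) * ((s + c) ^ 2 + z ^ 2) ^ (d / 2 - 1)))
        ((1 / 2) * ((2 * (d / 2)) * ((s + c) ^ 2 + z ^ 2) ^ (d / 2 - 1)
          + (2 * (s + c) * (d / 2)) *
            (2 * (s + c) * (d / 2 - 1) * ((s + c) ^ 2 + z ^ 2) ^ (d / 2 - 1 - 1)))) c := by
    intro c
    have h1 : HasDerivAt (fun c : ℝ => 2 * (s + c) * (d / 2)) (2 * (d / 2)) c := by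
      have := (((hasDerivAt_id c).const_add s).const_mul 2).mul_const (d / 2)
      simpa using this
    have h2 : HasDerivAt (fun c : ℝ => ((s + c) ^ 2 + z ^ 2) ^ (d / 2 - 1))
        (2 * (s + c) * (d / 2 - 1) * ((s + c) ^ 2 + z ^ 2) ^ (d / 2 - 1 - 1)) c :=
      (hqd c).rpow_const (Or.inl (hq c).ne')
    exact (h1.mul h2).const_mul (1 / 2)
  apply strictConvexOn_univ_of_deriv2_pos
  · have : Continuous fun c : ℝ => (s + c) ^ 2 + z ^ 2 := by continuity
    exact continuous_const.mul (this.rpow_const fun x => Or.inl (hq x).ne')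
  · intro x
    have e1 : deriv (fun c : ℝ => (1 / 2) * ((s + c) ^ 2 + z ^ 2) ^ (d / 2))
        = fun c => (1 / 2) * (2 * (s + c) * (d / 2) * ((s + c) ^ 2 + z ^ 2) ^ (d / 2 - 1)) :=
      funext fun c => (hderiv1 c).deriv
    rw [show deriv^[2] = deriv ∘ deriv from rfl, Function.comp_apply, e1, (hderiv2 x).deriv]
    have hE : 0 < ((s + x) ^ 2 + z ^ 2) ^ (d / 2 - 1 - 1) := rpow_pos_of_pos (hq x) _
    have hsplit : ((s + x) ^ 2 + z ^ 2) ^ (d / 2 - 1)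
        = ((s + x) ^ 2 + z ^ 2) ^ (d / 2 - 1 - 1) * ((s + x) ^ 2 + z ^ 2) := by
      rw [← Real.rpow_add_one (hq x).ne']
      ring_nf
    rw [hsplit]
    have key : (1 / 2) * ((2 * (d / 2)) * (((s + x) ^ 2 + z ^ 2) ^ (d / 2 - 1 - 1) * ((s + x) ^ 2 + z ^ 2))
          + (2 * (s + x) * (d / 2)) *
            (2 * (s + x) * (d / 2 - 1) * ((s + x) ^ 2 + z ^ 2) ^ (d / 2 - 1 - 1)))
        = (1 / 2) * d * ((s + x) ^ 2 + z ^ 2) ^ (d / 2 - 1 - 1)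
            * ((d - 1) * (s + x) ^ 2 + z ^ 2) := by ring
    rw [key]
    have hd0 : 0 < d := lt_of_lt_of_le one_pos hd
    have h3 : 0 < (d - 1) * (s + x) ^ 2 + z ^ 2 := by nlinarith [sq_nonneg (s + x), sq_nonneg z]
    positivity

theorem stmt_2 (t z d : ℝ) (hz : 0 < z) (hd : 1 ≤ d) :
    StrictConvexOn ℝ Set.univ
      (fun c : ℝ => (1 / 2) * ((t + c) ^ 2 + z ^ 2) ^ (d / 2)
        + (1 / 2) * ((-t + c) ^ 2 + z ^ 2) ^ (d / 2)) := by
  exact (aux_strict t z d hz hd).add (aux_strict (-t) z d hz hd)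
end

section
/- Fix real numbers t and z with z > 0 and a real d ≥ 1. The function g(c) := (1/2)((t+c)² + z²)^(d/2) + (1/2)((-t+c)² + z²)^(d/2) is even, and strictly increasing on [0, ∞). In particular g(c) ≥ g(0) for all real c, with equality iff c = 0. -/
theorem stmt_3 (t z d : ℝ) (hz : 0 < z) (hd : 1 ≤ d)
    (g : ℝ → ℝ)
    (hg : g = fun c : ℝ => (1 / 2) * ((t + c) ^ 2 + z ^ 2) ^ (d / 2)
        + (1 / 2) * ((-t + c) ^ 2 + z ^ 2) ^ (d / 2)) :
    (∀ c : ℝ, g (-c) = g c) ∧ StrictMonoOn g (Set.Ici 0) ∧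
      (∀ c : ℝ, g 0 ≤ g c ∧ (g c = g 0 ↔ c = 0)) := by
  have hz2 : ∀ x : ℝ, (0:ℝ) < x ^ 2 + z ^ 2 := fun x => by positivity
  -- the auxiliary function f x = x * (x^2+z^2)^(d/2-1) is strictly monotone
  set f : ℝ → ℝ := fun x => x * (x ^ 2 + z ^ 2) ^ (d / 2 - 1) with hf
  have hfderiv : ∀ x : ℝ, HasDerivAt f
      ((x ^ 2 + z ^ 2) ^ (d / 2 - 1 - 1) * ((d - 1) * x ^ 2 + z ^ 2)) x := by
    intro x
    have h1 : HasDerivAt (fun x : ℝ => x ^ 2 + z ^ 2) (2 * x) x := by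
      simpa [mul_comm] using (hasDerivAt_pow 2 x).add_const (z ^ 2)
    have h2 := h1.rpow_const (p := d / 2 - 1) (Or.inl (hz2 x).ne')
    have h3 := (hasDerivAt_id x).mul h2
    refine h3.congr_deriv ?_
    have hw : (x ^ 2 + z ^ 2) ^ (d / 2 - 1)
        = (x ^ 2 + z ^ 2) ^ (d / 2 - 1 - 1) * (x ^ 2 + z ^ 2) := by
      rw [show d / 2 - 1 = (d / 2 - 1 - 1) + 1 by ring, Real.rpow_add (hz2 x),
        Real.rpow_one]
      ring_nf
    rw [id_eq, hw]; ring_nf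
  have hfmono : StrictMono f := by
    apply strictMono_of_deriv_pos
    intro x
    rw [(hfderiv x).deriv]
    have h1 : (0:ℝ) < (x ^ 2 + z ^ 2) ^ (d / 2 - 1 - 1) :=
      Real.rpow_pos_of_pos (hz2 x) _
    have h2 : (0:ℝ) < (d - 1) * x ^ 2 + z ^ 2 := by nlinarith [sq_nonneg x, sq_nonneg z]
    positivity
  have hfodd : ∀ x : ℝ, f (-x) = -f x := by
    intro x; simp [hf, neg_sq]
  -- derivative of g
  have hgderiv : ∀ c : ℝ, HasDerivAt g ((d / 2) * (f (t + c) + f (-t + c))) c := by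
    intro c
    have h1 : HasDerivAt (fun c : ℝ => (t + c) ^ 2 + z ^ 2) (2 * (t + c)) c := by
      have := ((hasDerivAt_id c).const_add t).pow 2
      simpa [mul_comm] using this.add_const (z ^ 2)
    have h2 : HasDerivAt (fun c : ℝ => (-t + c) ^ 2 + z ^ 2) (2 * (-t + c)) c := by
      have := ((hasDerivAt_id c).const_add (-t)).pow 2
      simpa [mul_comm] using this.add_const (z ^ 2)
    have h1' := (h1.rpow_const (p := d / 2) (Or.inl (by positivity))).const_mul (1/2 : ℝ)
    have h2' := (h2.rpow_const (p := d / 2) (Or.inl (by positivity))).const_mul (1/2 : ℝ)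
    have h3 := h1'.add h2'
    rw [hg]
    refine h3.congr_deriv ?_
    simp only [hf]
    ring
  have hderivpos : ∀ c : ℝ, 0 < c → 0 < deriv g c := by
    intro c hc
    rw [(hgderiv c).deriv]
    have h1 : f t < f (t + c) := hfmono (by linarith)
    have h2 : f (-t) < f (-t + c) := hfmono (by linarith)
    have h3 : f (-t) = -f t := hfodd t
    have : 0 < f (t + c) + f (-t + c) := by linarith
    have hd2 : (0:ℝ) < d / 2 := by linarith
    positivity
  have hcont : Continuous g := by
    rw [hg]
    apply Continuous.add
    · exact continuous_const.mul ((((continuous_const.add continuous_id).pow 2).add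
        continuous_const).rpow_const (fun x => Or.inl (hz2 _).ne'))
    · exact continuous_const.mul ((((continuous_const.add continuous_id).pow 2).add
        continuous_const).rpow_const (fun x => Or.inl (hz2 _).ne'))
  have hmono : StrictMonoOn g (Set.Ici 0) := by
    apply strictMonoOn_of_deriv_pos (convex_Ici 0) hcont.continuousOn
    intro x hx
    rw [interior_Ici] at hx
    exact hderivpos x hx
  have heven : ∀ c : ℝ, g (-c) = g c := by
    intro c
    rw [hg]
    have e1 : (t + -c) ^ 2 = (-t + c) ^ 2 := by ring
    have e2 : (-t + -c) ^ 2 = (t + c) ^ 2 := by ring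
    simp only [e1, e2]
    ring
  refine ⟨heven, hmono, fun c => ?_⟩
  have key : c ≠ 0 → g 0 < g c := by
    intro hc
    rcases lt_or_gt_of_ne hc with h | h
    · rw [← heven c]
      exact hmono (le_refl (0:ℝ)) (by simp; linarith) (by linarith)
    · exact hmono (le_refl (0:ℝ)) (le_of_lt h) h
  constructor
  · by_cases hc : c = 0
    · simp [hc]
    · exact (key hc).le
  · constructor
    · intro h
      by_contra hc
      exact absurd h (ne_of_gt (key hc))
    · intro h; rw [h]
end

section
/- Let K be a compact convex subset of ℝ^d containing the open ball of radius r > 0 around the origin, let u be a unit vector, y in the projection Y_u of K onto {u}^⊥, and b(y) = max{α : αu + y ∈ K}. If (δ_m) is a sequence in (0,1) with δ_m → 0, then b((1-δ_m) y) → b(y). -/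
open Set Filter

theorem stmt_6 (d : ℕ) (K : Set (EuclideanSpace ℝ (Fin d)))
    (hKc : IsCompact K) (hKconv : Convex ℝ K)
    (r : ℝ) (hr : 0 < r) (hball : Metric.ball 0 r ⊆ K)
    (u : EuclideanSpace ℝ (Fin d)) (hu : ‖u‖ = 1)
    (Yu : Set (EuclideanSpace ℝ (Fin d)))
    (hYu : Yu = {y | inner ℝ y u = (0 : ℝ) ∧ ∃ α : ℝ, α • u + y ∈ K})
    (b : EuclideanSpace ℝ (Fin d) → ℝ)
    (hb : ∀ y ∈ Yu, b y = sSup {α : ℝ | α • u + y ∈ K})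
    (y : EuclideanSpace ℝ (Fin d)) (hy : y ∈ Yu)
    (δ : ℕ → ℝ) (hδ : ∀ m, δ m ∈ Set.Ioo (0 : ℝ) 1)
    (hδ0 : Tendsto δ atTop (nhds 0)) :
    Tendsto (fun m => b ((1 - δ m) • y)) atTop (nhds (b y)) := by
  obtain ⟨R, hR⟩ := hKc.isBounded.subset_closedBall 0
  have hyu : inner ℝ y u = (0 : ℝ) := (hYu ▸ hy).1
  obtain ⟨α0, hα0⟩ := (hYu ▸ hy).2
  have h0K : (0 : EuclideanSpace ℝ (Fin d)) ∈ K := hball (by simp [hr])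
  have hKclosed := hKc.isClosed
  -- any α with α • u + z ∈ K (z ⊥ u) satisfies |α| ≤ R
  have key : ∀ (z : EuclideanSpace ℝ (Fin d)), inner ℝ z u = (0 : ℝ) →
      ∀ α : ℝ, α • u + z ∈ K → |α| ≤ R := by
    intro z hz α hα
    have h1 : (inner ℝ (α • u + z) u : ℝ) = α := by
      rw [inner_add_left, real_inner_smul_left, hz, real_inner_self_eq_norm_mul_norm, hu]
      ring
    have h2 : |(inner ℝ (α • u + z) u : ℝ)| ≤ ‖α • u + z‖ * ‖u‖ := abs_real_inner_le_norm _ _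
    have h3 : ‖α • u + z‖ ≤ R := by
      simpa [Metric.mem_closedBall, dist_zero_right] using hR hα
    rw [h1, hu, mul_one] at h2
    linarith
  have hSclosed : ∀ z : EuclideanSpace ℝ (Fin d),
      IsClosed {α : ℝ | α • u + z ∈ K} := by
    intro z
    exact hKclosed.preimage ((continuous_id.smul continuous_const).add continuous_const)
  have hbdd : ∀ z : EuclideanSpace ℝ (Fin d), inner ℝ z u = (0 : ℝ) →
      BddAbove {α : ℝ | α • u + z ∈ K} := by
    intro z hz
    exact ⟨R, fun α hα => (abs_le.mp (key z hz α hα)).2⟩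
  -- b y attains
  have hbyS : b y • u + y ∈ K := by
    have := (hSclosed y).csSup_mem ⟨α0, hα0⟩ (hbdd y hyu)
    rwa [hb y hy]
  -- facts about each m
  have hzperp : ∀ m : ℕ, inner ℝ ((1 - δ m) • y) u = (0 : ℝ) := by
    intro m
    rw [real_inner_smul_left, hyu, mul_zero]
  have hmem : ∀ m : ℕ, ((1 - δ m) * b y) • u + (1 - δ m) • y ∈ K := by
    intro m
    have h : (1 - δ m) • (b y • u + y) + δ m • (0 : EuclideanSpace ℝ (Fin d)) ∈ K :=
      hKconv hbyS h0K (by linarith [(hδ m).2]) (le_of_lt (hδ m).1) (by ring)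
    simpa [smul_add, smul_smul] using h
  have hYum : ∀ m : ℕ, (1 - δ m) • y ∈ Yu := by
    intro m
    rw [hYu]
    exact ⟨hzperp m, ⟨_, hmem m⟩⟩
  have hbm : ∀ m : ℕ, b ((1 - δ m) • y) = sSup {α : ℝ | α • u + (1 - δ m) • y ∈ K} :=
    fun m => hb _ (hYum m)
  have hβS : ∀ m : ℕ, b ((1 - δ m) • y) • u + (1 - δ m) • y ∈ K := by
    intro m
    have := (hSclosed ((1 - δ m) • y)).csSup_mem ⟨_, hmem m⟩ (hbdd _ (hzperp m))
    rwa [hbm m]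
  have hβge : ∀ m : ℕ, (1 - δ m) * b y ≤ b ((1 - δ m) • y) := by
    intro m
    rw [hbm m]
    exact le_csSup (hbdd _ (hzperp m)) (hmem m)
  have hβR : ∀ m : ℕ, b ((1 - δ m) • y) ∈ Set.Icc (-R) R := by
    intro m
    have := key _ (hzperp m) _ (hβS m)
    exact ⟨(abs_le.mp this).1, (abs_le.mp this).2⟩
  -- subsequence argument
  apply tendsto_of_subseq_tendsto
  intro ns hns
  obtain ⟨x, -, φ, hφ, hxlim⟩ := isCompact_Icc.tendsto_subseq
    (x := fun k => b ((1 - δ (ns k)) • y)) (fun k => hβR (ns k))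
  have hδ' : Tendsto (fun k => δ (ns (φ k))) atTop (nhds 0) :=
    hδ0.comp (hns.comp hφ.tendsto_atTop)
  have hxlim' : Tendsto (fun k => b ((1 - δ (ns (φ k))) • y)) atTop (nhds x) := hxlim
  have hlimK : x • u + y ∈ K := by
    have h1 : Tendsto (fun k => b ((1 - δ (ns (φ k))) • y) • u + (1 - δ (ns (φ k))) • y)
        atTop (nhds (x • u + ((1 : ℝ) - 0) • y)) :=
      (hxlim'.smul_const u).add ((tendsto_const_nhds.sub hδ').smul_const y)
    have h1' : Tendsto (fun k => b ((1 - δ (ns (φ k))) • y) • u + (1 - δ (ns (φ k))) • y)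
        atTop (nhds (x • u + y)) := by simpa using h1
    exact hKclosed.mem_of_tendsto h1' (Filter.Eventually.of_forall fun k => hβS (ns (φ k)))
  have hxle : x ≤ b y := by
    rw [hb y hy]
    exact le_csSup (hbdd y hyu) hlimK
  have hxge : b y ≤ x := by
    have ht : Tendsto (fun k => (1 - δ (ns (φ k))) * b y) atTop (nhds (b y)) := by
      have h := ((tendsto_const_nhds (x := (1 : ℝ))).sub hδ').mul_const (b y)
      simpa using h
    exact le_of_tendsto_of_tendsto' ht hxlim' (fun k => hβge (ns (φ k)))
  have hxeq : x = b y := le_antisymm hxle hxge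
  exact ⟨φ, hxeq ▸ hxlim'⟩
end

section
/- Define Q_d := ∫_{-1}^0 (1-t)^{d/2} (1-t²)^{(d-3)/2} dt for real d ≥ 3. Then Q_d ~ √π · (3√3 / (4√d)) · (32/27)^{d/2} as d → ∞, i.e., the ratio of the two sides tends to 1. -/
open Real Filter MeasureTheory
open Set Topology

noncomputable def phi (t : ℝ) : ℝ := 2 * Real.log (1 - t) + Real.log (1 + t)

lemma phi_shift {x : ℝ} (hx1 : -2/3 < x) (hx2 : x < 4/3) :
    phi (-1/3 + x) = Real.log (32/27) + (2 * Real.log (1 - 3/4*x) + Real.log (1 + 3/2*x)) := by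
  have h1 : (0:ℝ) < 1 - 3/4*x := by linarith
  have h2 : (0:ℝ) < 1 + 3/2*x := by linarith
  unfold phi
  rw [show (1:ℝ) - (-1/3 + x) = (4/3) * (1 - 3/4*x) by ring,
      show (1:ℝ) + (-1/3 + x) = (2/3) * (1 + 3/2*x) by ring,
      Real.log_mul (by norm_num) h1.ne', Real.log_mul (by norm_num) h2.ne',
      show Real.log (32/27) = 2 * Real.log (4/3) + Real.log (2/3) by
        rw [show (32:ℝ)/27 = (4/3)^2 * (2/3) by norm_num,
          Real.log_mul (by positivity) (by norm_num), Real.log_pow]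
        push_cast; ring]
  ring

lemma log_quad {v : ℝ} (h1 : -1 < v) (h2 : v ≤ 0) : Real.log (1 + v) ≤ v - v ^ 2 / 2 := by
  set f : ℝ → ℝ := fun w => w - w ^ 2 / 2 - Real.log (1 + w) with hf
  have key : AntitoneOn f (Set.Icc v 0) := by
    apply antitoneOn_of_deriv_nonpos (convex_Icc v 0)
    · apply ContinuousOn.sub (by fun_prop)
      apply ContinuousOn.log (by fun_prop)
      intro w hw
      simp only [Set.mem_Icc] at hw
      nlinarith [hw.1]
    · intro w hw
      rw [interior_Icc] at hw
      have hw1 : -1 < w := lt_of_lt_of_le h1 hw.1.le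
      have : HasDerivAt f (1 - w - (1 + w)⁻¹) w := by
        have h0 : (1 : ℝ) + w ≠ 0 := by linarith
        have := ((hasDerivAt_id w).sub ((hasDerivAt_pow 2 w).div_const 2)).sub
          (((hasDerivAt_id w).const_add 1).log h0)
        convert this using 1
        · rfl
        · rfl
        · rfl
        · simp
      exact this.differentiableAt.differentiableWithinAt
    · intro w hw
      rw [interior_Icc] at hw
      have hw1 : -1 < w := lt_of_lt_of_le h1 hw.1.le
      have h0 : (0 : ℝ) < 1 + w := by linarith
      have hd : HasDerivAt f (1 - w - (1 + w)⁻¹) w := by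
        have h0 : (1 : ℝ) + w ≠ 0 := by linarith
        have := ((hasDerivAt_id w).sub ((hasDerivAt_pow 2 w).div_const 2)).sub
          (((hasDerivAt_id w).const_add 1).log h0)
        convert this using 1
        · rfl
        · rfl
        · rfl
        · simp
      rw [hd.deriv]
      rw [sub_nonpos]
      rw [inv_eq_one_div, le_div_iff₀ h0]
      nlinarith [sq_nonneg w]
  have h := key (Set.mem_Icc.2 ⟨le_refl v, h2⟩) (Set.mem_Icc.2 ⟨h2, le_refl 0⟩) h2
  simp only [hf] at h
  simp at h
  linarith

lemma phi_quad {t : ℝ} (h1 : -1 < t) (h2 : t ≤ 0) :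
    phi t ≤ Real.log (32/27) - (t + 1/3)^2 / 4 := by
  obtain ⟨x, rfl⟩ : ∃ x, t = -1/3 + x := ⟨t + 1/3, by ring⟩
  have hx1 : -2/3 < x := by linarith
  have hx2 : x < 4/3 := by linarith
  rw [phi_shift hx1 hx2, show (-1/3 + x + 1/3 : ℝ) = x by ring]
  rcases le_or_gt 0 x with hpos | hneg
  · have A := log_quad (v := -(3/4*x)) (by linarith) (by linarith)
    rw [show (1:ℝ) + -(3/4*x) = 1 - 3/4*x by ring] at A
    have B := Real.log_le_sub_one_of_pos (show (0:ℝ) < 1 + 3/2*x by linarith)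
    nlinarith [sq_nonneg x]
  · have A := log_quad (v := 3/2*x) (by linarith) (by linarith)
    have B := Real.log_le_sub_one_of_pos (show (0:ℝ) < 1 - 3/4*x by linarith)
    nlinarith [sq_nonneg x]

set_option maxHeartbeats 1000000 in
lemma phi_err {x : ℝ} (hx : |x| ≤ 1/2) :
    |phi (-1/3 + x) - Real.log (32/27) + 27/16 * x^2| ≤ 16 * |x|^3 := by
  obtain ⟨hxl, hxr⟩ := abs_le.1 hx
  have hx1 : -2/3 < x := by linarith
  have hx2 : x < 4/3 := by linarith
  have key : phi (-1/3+x) - Real.log (32/27) + 27/16*x^2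
      = 2*((3/4*x + (3/4*x)^2/2) + Real.log (1 - 3/4*x))
        + (-(3/2*x) + (3/2*x)^2/2 + Real.log (1 + 3/2*x)) := by
    rw [phi_shift hx1 hx2]; ring
  have hu : |3/4*x| < 1 := by rw [abs_mul]; rw [abs_of_nonneg (by norm_num : (0:ℝ) ≤ 3/4)]; nlinarith [abs_nonneg x]
  have hv : |(-(3/2))*x| < 1 := by rw [abs_mul, abs_of_nonpos (by norm_num : (-(3/2):ℝ) ≤ 0)]; nlinarith [abs_nonneg x]
  have A := Real.abs_log_sub_add_sum_range_le hu 2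
  have B := Real.abs_log_sub_add_sum_range_le hv 2
  simp only [Finset.sum_range_succ, Finset.sum_range_zero] at A B
  norm_num at A B
  rw [key]
  have habs1 : |3/4*x| = 3/4*|x| := by rw [abs_mul]; norm_num
  have habs2 : |3/2*x| = 3/2*|x| := by rw [abs_mul]; norm_num
  rw [habs1] at hu
  have e1 := A
  have e2 := B
  have d1 : (3/4*|x|)^3 / (1 - 3/4*|x|) ≤ (27/64*|x|^3) / (5/8) := by
    apply div_le_div₀ (by positivity) (by nlinarith [abs_nonneg x]) (by norm_num) (by linarith)
  have d2 : (3/2*|x|)^3 / (1 - 3/2*|x|) ≤ (27/8*|x|^3) / (1/4) := by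
    apply div_le_div₀ (by positivity) (by nlinarith [abs_nonneg x]) (by norm_num) (by linarith)
  calc |2*(3/4*x + (3/4*x)^2/2 + Real.log (1 - 3/4*x))
        + (-(3/2*x) + (3/2*x)^2/2 + Real.log (1 + 3/2*x))|
      ≤ 2*|3/4*x + (3/4*x)^2/2 + Real.log (1 - 3/4*x)|
        + |-(3/2*x) + (3/2*x)^2/2 + Real.log (1 + 3/2*x)| := by
        calc _ ≤ |2*(3/4*x + (3/4*x)^2/2 + Real.log (1 - 3/4*x))|
            + |-(3/2*x) + (3/2*x)^2/2 + Real.log (1 + 3/2*x)| := abs_add_le _ _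
          _ = _ := by rw [abs_mul]; norm_num
    _ ≤ 16 * |x|^3 := by
        linarith [e1, e2, d1, d2, pow_nonneg (abs_nonneg x) 3]

lemma sqrt_tendsto : Tendsto Real.sqrt atTop atTop := by
  apply tendsto_atTop_atTop.2
  intro b
  refine ⟨b^2, fun a ha => ?_⟩
  calc b ≤ |b| := le_abs_self b
    _ = Real.sqrt (b^2) := (Real.sqrt_sq_eq_abs b).symm
    _ ≤ Real.sqrt a := Real.sqrt_le_sqrt ha

lemma h_tendsto (s : ℝ) :
    Tendsto (fun d => (d-3)/2 * (phi (-1/3 + s / Real.sqrt d) - Real.log (32/27)))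
      atTop (𝓝 (-(27/32) * s^2)) := by
  have h1 : Tendsto (fun d : ℝ => (d-3)/2 *
      (phi (-1/3 + s/Real.sqrt d) - Real.log (32/27) + 27/16*(s/Real.sqrt d)^2)) atTop (𝓝 0) := by
    apply squeeze_zero_norm' (a := fun d : ℝ => 8*|s|^3 / Real.sqrt d)
    · filter_upwards [eventually_ge_atTop (3:ℝ), eventually_ge_atTop (4*s^2),
        eventually_ge_atTop (1:ℝ)] with d hd3 hds hd1
      have hsd : 0 < Real.sqrt d := Real.sqrt_pos.2 (by linarith)
      have hxd : |s/Real.sqrt d| ≤ 1/2 := by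
        rw [abs_div, abs_of_pos hsd, div_le_iff₀ hsd]
        have h2s : 2*|s| ≤ Real.sqrt d := by
          rw [show (2:ℝ)*|s| = Real.sqrt ((2*|s|)^2) by
            rw [Real.sqrt_sq (by positivity)]]
          apply Real.sqrt_le_sqrt; nlinarith [sq_abs s]
        linarith
      have key := phi_err hxd
      rw [norm_mul, Real.norm_eq_abs, Real.norm_eq_abs]
      have hd2 : |(d-3)/2| ≤ d/2 := by rw [abs_of_nonneg (by linarith)]; linarith
      have habs : |s/Real.sqrt d|^3 = |s|^3/(Real.sqrt d)^3 := by
        rw [abs_div, abs_of_pos hsd, div_pow]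
      calc |(d-3)/2| * |phi (-1/3 + s/Real.sqrt d) - Real.log (32/27) + 27/16*(s/Real.sqrt d)^2|
          ≤ (d/2) * (16 * |s/Real.sqrt d|^3) := by
            apply mul_le_mul hd2 key (abs_nonneg _) (by linarith)
        _ = 8 * |s|^3 * (d / (Real.sqrt d)^3) := by rw [habs]; ring
        _ = 8*|s|^3 / Real.sqrt d := by
            rw [show (Real.sqrt d)^3 = d * Real.sqrt d by
              rw [pow_succ, Real.sq_sqrt (by linarith)],
              div_mul_eq_div_div, div_self (show (d:ℝ) ≠ 0 by linarith)]
            ring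
    · exact Tendsto.div_atTop tendsto_const_nhds sqrt_tendsto
  have h2 : Tendsto (fun d : ℝ => (d-3)/2 * (-(27/16)*(s/Real.sqrt d)^2)) atTop
      (𝓝 (-(27/32) * s^2)) := by
    have base : Tendsto (fun d : ℝ => -(27/32) * s^2 * (1 - 3/d)) atTop (𝓝 (-(27/32) * s^2)) := by
      have : Tendsto (fun d : ℝ => 1 - 3/d) atTop (𝓝 1) := by
        simpa using tendsto_const_nhds.sub (Tendsto.div_atTop (tendsto_const_nhds (x := (3:ℝ))) tendsto_id)
      have h := (tendsto_const_nhds (x := -(27/32)*s^2)).mul this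
      simpa using h
    apply base.congr'
    filter_upwards [eventually_ge_atTop (1:ℝ)] with d hd1
    have hd0 : (0:ℝ) < d := by linarith
    rw [div_pow, Real.sq_sqrt hd0.le]
    field_simp
    ring
  have := h1.add h2
  rw [zero_add] at this
  apply this.congr
  intro d
  ring

noncomputable def Fd (d s : ℝ) : ℝ :=
  Set.indicator (Set.Ioc (-(2/3) * Real.sqrt d) ((1/3) * Real.sqrt d))
    (fun s => Real.exp ((d-3)/2 * (phi (-1/3 + s / Real.sqrt d) - Real.log (32/27))) *
      (1 - (-1/3 + s / Real.sqrt d)) ^ ((3:ℝ)/2)) s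

lemma Fd_tendsto (s : ℝ) : Tendsto (fun d => Fd d s) atTop
    (𝓝 (Real.exp (-(27/32) * s^2) * (4/3 : ℝ) ^ ((3:ℝ)/2))) := by
  have hdiv : Tendsto (fun d : ℝ => s / Real.sqrt d) atTop (𝓝 0) :=
    Tendsto.div_atTop tendsto_const_nhds sqrt_tendsto
  have ht : Tendsto (fun d : ℝ => 1 - (-1/3 + s / Real.sqrt d)) atTop (𝓝 (4/3)) := by
    have h := tendsto_const_nhds (x := (1:ℝ)) |>.sub ((tendsto_const_nhds (x := (-1/3:ℝ))).add hdiv)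
    norm_num at h
    convert h using 2
    norm_num
  have hlim : Tendsto (fun d : ℝ =>
      Real.exp ((d-3)/2 * (phi (-1/3 + s / Real.sqrt d) - Real.log (32/27))) *
      (1 - (-1/3 + s / Real.sqrt d)) ^ ((3:ℝ)/2)) atTop
      (𝓝 (Real.exp (-(27/32) * s^2) * (4/3 : ℝ) ^ ((3:ℝ)/2))) :=
    ((Real.continuous_exp.tendsto _).comp (h_tendsto s)).mul
      (ht.rpow tendsto_const_nhds (Or.inl (by norm_num)))
  apply hlim.congr'
  filter_upwards [sqrt_tendsto.eventually_gt_atTop (3*|s|)] with d hd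
  have hmem : s ∈ Set.Ioc (-(2/3) * Real.sqrt d) ((1/3) * Real.sqrt d) := by
    constructor
    · nlinarith [abs_nonneg s, neg_abs_le s]
    · nlinarith [le_abs_self s]
  rw [Fd, Set.indicator_of_mem hmem]

lemma Fd_meas (d : ℝ) : AEStronglyMeasurable (Fd d) volume := by
  apply Measurable.aestronglyMeasurable
  unfold Fd phi
  apply Measurable.indicator _ measurableSet_Ioc
  have m1 : Measurable fun s : ℝ => -1/3 + s / Real.sqrt d :=
    (measurable_id.div_const _).const_add _
  apply Measurable.mul
  · apply Real.measurable_exp.comp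
    apply Measurable.mul measurable_const
    apply Measurable.sub _ measurable_const
    exact ((Real.measurable_log.comp (measurable_const.sub m1)).const_mul 2).add
      (Real.measurable_log.comp (measurable_const.add m1))
  · exact (Real.continuous_rpow_const (by norm_num)).measurable.comp (measurable_const.sub m1)

lemma Fd_bound {d : ℝ} (hd : 6 ≤ d) (s : ℝ) :
    ‖Fd d s‖ ≤ (2:ℝ)^((3:ℝ)/2) * Real.exp (-s^2/16) := by
  unfold Fd
  by_cases hmem : s ∈ Set.Ioc (-(2/3) * Real.sqrt d) ((1/3) * Real.sqrt d)
  · rw [Set.indicator_of_mem hmem]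
    have hd0 : (0:ℝ) < d := by linarith
    have hsd : 0 < Real.sqrt d := Real.sqrt_pos.2 hd0
    set t := -1/3 + s / Real.sqrt d with hts
    have hst : s / Real.sqrt d = t + 1/3 := by rw [hts]; ring
    have h23 : -2/3 < s / Real.sqrt d := by
      rw [lt_div_iff₀ hsd]; nlinarith [hmem.1]
    have h13 : s / Real.sqrt d ≤ 1/3 := by
      rw [div_le_iff₀ hsd]; nlinarith [hmem.2]
    have ht1 : -1 < t := by rw [hts]; linarith
    have ht2 : t ≤ 0 := by rw [hts]; linarith
    have hq := phi_quad ht1 ht2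
    have hsq : (t + 1/3)^2 = s^2/d := by
      rw [← hst, div_pow, Real.sq_sqrt hd0.le]
    have hexp : (d-3)/2 * (phi t - Real.log (32/27)) ≤ -s^2/16 := by
      have h1 : phi t - Real.log (32/27) ≤ -(s^2/d)/4 := by
        rw [← hsq]; linarith
      have h2 := mul_le_mul_of_nonneg_left h1 (show (0:ℝ) ≤ (d-3)/2 by linarith)
      have e : (d-3)/2 * (-(s^2/d)/4) = -((d-3)*s^2/(8*d)) := by
        field_simp
        ring
      have last : -((d-3)*s^2/(8*d)) ≤ -(s^2/16) := by
        rw [neg_le_neg_iff, div_le_div_iff₀ (by norm_num) (by positivity)]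
        nlinarith [sq_nonneg s]
      calc (d-3)/2 * (phi t - Real.log (32/27)) ≤ (d-3)/2 * (-(s^2/d)/4) := h2
        _ = -((d-3)*s^2/(8*d)) := e
        _ ≤ -(s^2/16) := last
        _ = -s^2/16 := by ring
    have hb1 : Real.exp ((d-3)/2 * (phi t - Real.log (32/27))) ≤ Real.exp (-s^2/16) :=
      Real.exp_le_exp.2 hexp
    have hb2 : (1 - t) ^ ((3:ℝ)/2) ≤ (2:ℝ)^((3:ℝ)/2) :=
      Real.rpow_le_rpow (by linarith) (by linarith) (by norm_num)
    rw [Real.norm_eq_abs, abs_of_nonneg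
      (mul_nonneg (Real.exp_nonneg _) (Real.rpow_nonneg (by linarith) _))]
    calc Real.exp ((d-3)/2 * (phi t - Real.log (32/27))) * (1 - t) ^ ((3:ℝ)/2)
        ≤ Real.exp (-s^2/16) * (2:ℝ)^((3:ℝ)/2) := by
          exact mul_le_mul hb1 hb2 (Real.rpow_nonneg (by linarith) _) (Real.exp_nonneg _)
      _ = (2:ℝ)^((3:ℝ)/2) * Real.exp (-s^2/16) := by ring
  · rw [Set.indicator_of_notMem hmem]
    simp only [norm_zero]
    positivity

lemma bound_int : Integrable (fun s : ℝ => (2:ℝ)^((3:ℝ)/2) * Real.exp (-s^2/16)) := by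
  apply Integrable.const_mul
  have h := integrable_exp_neg_mul_sq (show (0:ℝ) < 1/16 by norm_num)
  apply h.congr
  filter_upwards with s
  congr 1
  ring

lemma I_tendsto : Tendsto (fun d => ∫ s, Fd d s) atTop
    (𝓝 ((4/3 : ℝ)^((3:ℝ)/2) * Real.sqrt (π/(27/32)))) := by
  have main := MeasureTheory.tendsto_integral_filter_of_dominated_convergence
    (μ := (volume : Measure ℝ)) (F := Fd)
    (f := fun s => Real.exp (-(27/32)*s^2) * (4/3:ℝ)^((3:ℝ)/2))
    (bound := fun s => (2:ℝ)^((3:ℝ)/2) * Real.exp (-s^2/16))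
    (Eventually.of_forall Fd_meas)
    (by filter_upwards [eventually_ge_atTop (6:ℝ)] with d hd
        exact Eventually.of_forall (Fd_bound hd))
    bound_int
    (Eventually.of_forall fun s => Fd_tendsto s)
  have hval : (∫ s : ℝ, Real.exp (-(27/32)*s^2) * (4/3:ℝ)^((3:ℝ)/2))
      = (4/3:ℝ)^((3:ℝ)/2) * Real.sqrt (π/(27/32)) := by
    rw [MeasureTheory.integral_mul_const]
    rw [show (fun s : ℝ => Real.exp (-(27/32)*s^2)) = fun s : ℝ => Real.exp (-(27/32)*s^2) from rfl]
    rw [integral_gaussian]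
    ring
  rwa [hval] at main

lemma integrand_eq {d t : ℝ} (hd : 3 ≤ d) (h1 : -1 < t) (h2 : t ≤ 0) :
    (1 - t) ^ (d/2) * (1 - t^2) ^ ((d-3)/2)
      = Real.exp ((d-3)/2 * phi t) * (1 - t) ^ ((3:ℝ)/2) := by
  have p1 : (0:ℝ) < 1 - t := by linarith
  have p2 : (0:ℝ) < 1 + t := by linarith
  have p3 : (0:ℝ) < 1 - t^2 := by nlinarith
  rw [Real.rpow_def_of_pos p1, Real.rpow_def_of_pos p3, Real.rpow_def_of_pos p1,
    show (1:ℝ) - t^2 = (1-t)*(1+t) by ring, Real.log_mul p1.ne' p2.ne',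
    ← Real.exp_add, ← Real.exp_add]
  simp only [phi]
  congr 1
  ring

theorem stmt_13 (Q : ℝ → ℝ)
    (hQ : ∀ d : ℝ, 3 ≤ d →
      Q d = ∫ t in (-1 : ℝ)..0, (1 - t) ^ (d / 2) * (1 - t ^ 2) ^ ((d - 3) / 2)) :
    Tendsto (fun d : ℝ =>
        Q d / (Real.sqrt π * (3 * Real.sqrt 3 / (4 * Real.sqrt d)) * (32 / 27) ^ (d / 2)))
      atTop (nhds 1) := by
  set L : ℝ := Real.log (32/27) with hL
  set K : ℝ := Real.exp (-(3/2) * L) * (4 / (Real.sqrt π * (3 * Real.sqrt 3))) with hK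
  have key : ∀ d : ℝ, 3 ≤ d →
      Q d / (Real.sqrt π * (3 * Real.sqrt 3 / (4 * Real.sqrt d)) * (32 / 27) ^ (d / 2))
        = (∫ s, Fd d s) * K := by
    intro d hd
    have hd0 : (0:ℝ) < d := by linarith
    have hsd : 0 < Real.sqrt d := Real.sqrt_pos.2 hd0
    set g : ℝ → ℝ := fun t => Real.exp ((d-3)/2 * phi t) * (1-t)^((3:ℝ)/2) with hg
    set f : ℝ → ℝ := fun t => Real.exp ((d-3)/2 * (phi t - L)) * (1-t)^((3:ℝ)/2) with hf
    have hfg : ∀ t, f t = (Real.exp ((d-3)/2 * L))⁻¹ * g t := by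
      intro t
      simp only [hf, hg, mul_sub, Real.exp_sub]
      field_simp
    have hQg : Q d = ∫ t in (-1:ℝ)..0, g t := by
      rw [hQ d hd, intervalIntegral.integral_of_le (by norm_num : (-1:ℝ) ≤ 0),
          intervalIntegral.integral_of_le (by norm_num : (-1:ℝ) ≤ 0)]
      apply MeasureTheory.setIntegral_congr_fun measurableSet_Ioc
      intro t ht
      exact integrand_eq hd ht.1 ht.2
    have hab : -(2/3) * Real.sqrt d ≤ (1/3) * Real.sqrt d := by nlinarith
    have hI1 : (∫ s, Fd d s)
        = ∫ s in (-(2/3)*Real.sqrt d)..((1/3)*Real.sqrt d), f (-1/3 + s / Real.sqrt d) := by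
      rw [intervalIntegral.integral_of_le hab]
      unfold Fd
      rw [MeasureTheory.integral_indicator measurableSet_Ioc]
    have hsub := intervalIntegral.integral_comp_add_div (f := f)
      (a := -(2/3)*Real.sqrt d) (b := (1/3)*Real.sqrt d) hsd.ne' (-1/3 : ℝ)
    have ep1 : (-1/3 + -(2/3)*Real.sqrt d/Real.sqrt d : ℝ) = -1 := by
      rw [mul_div_assoc, div_self hsd.ne']; ring
    have ep2 : (-1/3 + (1/3)*Real.sqrt d/Real.sqrt d : ℝ) = 0 := by
      rw [mul_div_assoc, div_self hsd.ne']; ring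
    rw [ep1, ep2] at hsub
    have hfInt : (∫ t in (-1:ℝ)..0, f t)
        = (Real.exp ((d-3)/2*L))⁻¹ * ∫ t in (-1:ℝ)..0, g t := by
      rw [show f = fun t => (Real.exp ((d-3)/2*L))⁻¹ * g t from funext hfg]
      exact intervalIntegral.integral_const_mul _ _
    have hQI : Q d = (∫ s, Fd d s) * Real.exp ((d-3)/2*L) / Real.sqrt d := by
      rw [hI1, hsub, smul_eq_mul, hfInt, ← hQg]
      field_simp
    rw [hQI, show (32/27:ℝ)^(d/2) = Real.exp (d/2 * L) by
        rw [Real.rpow_def_of_pos (by norm_num), hL, mul_comm],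
      show (d-3)/2 * L = d/2 * L + (-(3/2))*L by ring, Real.exp_add, hK]
    have e1 := Real.exp_ne_zero (d/2 * L)
    have e2 : Real.sqrt π ≠ 0 := by positivity
    have e3 : Real.sqrt 3 ≠ 0 := by positivity
    field_simp
  -- the constant
  have hPpos : 0 < ((4/3 : ℝ)^((3:ℝ)/2) * Real.sqrt (π/(27/32))) * K := by
    rw [hK]
    positivity
  have hPsq : (((4/3 : ℝ)^((3:ℝ)/2) * Real.sqrt (π/(27/32))) * K)^2 = 1 := by
    have e1 : ((4/3:ℝ)^((3:ℝ)/2))^2 = (4/3:ℝ)^(3:ℕ) := by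
      rw [← Real.rpow_natCast ((4/3:ℝ)^((3:ℝ)/2)) 2, ← Real.rpow_mul (by norm_num)]
      norm_num
    have e2 : (Real.sqrt (π/(27/32)))^2 = π/(27/32) := Real.sq_sqrt (by positivity)
    have e3 : (Real.exp (-(3/2) * L))^2 = (27/32:ℝ)^(3:ℕ) := by
      rw [← Real.exp_nat_mul]
      rw [show (2:ℕ) * (-(3/2) * L) = (3:ℕ) * Real.log (27/32) by
        rw [show Real.log (27/32) = -L by
          rw [hL, ← Real.log_inv]; norm_num]
        push_cast; ring]
      rw [← Real.log_pow, Real.exp_log (by positivity)]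
    have e4 : (Real.sqrt π * (3 * Real.sqrt 3))^2 = π * 27 := by
      rw [mul_pow, mul_pow, Real.sq_sqrt Real.pi_pos.le, Real.sq_sqrt (by norm_num : (0:ℝ) ≤ 3)]
      ring
    rw [hK]
    rw [show (((4/3 : ℝ)^((3:ℝ)/2) * Real.sqrt (π/(27/32))) *
        (Real.exp (-(3/2) * L) * (4 / (Real.sqrt π * (3 * Real.sqrt 3)))))^2
      = ((4/3:ℝ)^((3:ℝ)/2))^2 * (Real.sqrt (π/(27/32)))^2 * (Real.exp (-(3/2) * L))^2 *
        (16 / (Real.sqrt π * (3 * Real.sqrt 3))^2) by ring]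
    rw [e1, e2, e3, e4]
    have : π ≠ 0 := Real.pi_ne_zero
    field_simp
    ring
  have hP1 : ((4/3 : ℝ)^((3:ℝ)/2) * Real.sqrt (π/(27/32))) * K = 1 := by
    nlinarith [hPpos, hPsq]
  have main := I_tendsto.mul_const K
  rw [hP1] at main
  apply main.congr'
  filter_upwards [eventually_ge_atTop (3:ℝ)] with d hd
  exact (key d hd).symm
end

section
/- Define Q_d := ∫_{-1}^0 (1-t)^{d/2} (1-t²)^{(d-3)/2} dt for d ≥ 3. Then Q_d ≤ 2^{3/2} (32/27)^{(d-3)/2} · 2 for all d ≥ 3; in particular, the exponential growth rate of Q_d is at most 32/27 per unit of d/2, i.e., limsup_{d→∞} Q_d^{2/d} ≤ 32/27. -/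
open Real Filter MeasureTheory Topology

lemma stmt_14_pt_bound (d : ℝ) (hd : 3 ≤ d) (t : ℝ) (ht : t ∈ Set.uIoc (-1 : ℝ) 0) :
    ‖(1 - t) ^ (d / 2) * (1 - t ^ 2) ^ ((d - 3) / 2)‖ ≤
      2 ^ ((3 : ℝ) / 2) * (32 / 27) ^ ((d - 3) / 2) := by
  rw [Set.uIoc_of_le (by norm_num)] at ht
  obtain ⟨ht1, ht0⟩ := ht
  have h1t : (0:ℝ) < 1 - t := by linarith
  have h1t2 : (0:ℝ) ≤ 1 - t ^ 2 := by nlinarith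
  have hexp : (0:ℝ) ≤ (d - 3) / 2 := by linarith
  rw [Real.norm_eq_abs, abs_of_nonneg (by positivity)]
  have key : (1 - t) ^ (d / 2) * (1 - t ^ 2) ^ ((d - 3) / 2)
      = (1 - t) ^ ((3:ℝ) / 2) * ((1 - t) * (1 - t ^ 2)) ^ ((d - 3) / 2) := by
    rw [Real.mul_rpow h1t.le h1t2, ← mul_assoc, ← Real.rpow_add h1t]
    ring_nf
  rw [key]
  apply mul_le_mul
  · exact Real.rpow_le_rpow h1t.le (by linarith) (by norm_num)
  · apply Real.rpow_le_rpow (by positivity) _ hexp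
    nlinarith [sq_nonneg (t + 1/3)]
  · positivity
  · positivity

lemma stmt_14_main_bound (d : ℝ) (hd : 3 ≤ d) :
    (∫ t in (-1 : ℝ)..0, (1 - t) ^ (d / 2) * (1 - t ^ 2) ^ ((d - 3) / 2)) ≤
      2 ^ ((3 : ℝ) / 2) * (32 / 27) ^ ((d - 3) / 2) * 2 := by
  have h := intervalIntegral.norm_integral_le_of_norm_le_const (a := (-1:ℝ)) (b := 0)
    (C := 2 ^ ((3 : ℝ) / 2) * (32 / 27) ^ ((d - 3) / 2))
    (f := fun t => (1 - t) ^ (d / 2) * (1 - t ^ 2) ^ ((d - 3) / 2)) (stmt_14_pt_bound d hd)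
  have habs : |(0:ℝ) - (-1)| = 1 := by norm_num
  rw [habs, mul_one] at h
  have := le_trans (le_abs_self _) h
  have hC : (0:ℝ) ≤ 2 ^ ((3 : ℝ) / 2) * (32 / 27) ^ ((d - 3) / 2) := by positivity
  linarith

lemma stmt_14_tendsto :
    Tendsto (fun d : ℝ => Real.exp ((5 / d) * Real.log 2 + (1 - 3 / d) * Real.log (32 / 27)))
      atTop (𝓝 (32 / 27)) := by
  have h5 : Tendsto (fun d : ℝ => 5 / d) atTop (𝓝 0) := tendsto_id.const_div_atTop 5
  have h3 : Tendsto (fun d : ℝ => 3 / d) atTop (𝓝 0) := tendsto_id.const_div_atTop 3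
  have : Tendsto (fun d : ℝ => (5 / d) * Real.log 2 + (1 - 3 / d) * Real.log (32 / 27)) atTop
      (𝓝 (0 * Real.log 2 + (1 - 0) * Real.log (32 / 27))) :=
    ((h5.mul_const _)).add ((tendsto_const_nhds.sub h3).mul_const _)
  have h := (Real.continuous_exp.tendsto _).comp this
  simpa [Function.comp_def, Real.exp_log (by norm_num : (0:ℝ) < 32/27)] using h

lemma stmt_14_eq (d : ℝ) (hd : 3 ≤ d) :
    (2 ^ ((3:ℝ) / 2) * (32 / 27) ^ ((d - 3) / 2) * 2) ^ (2 / d)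
      = Real.exp ((5 / d) * Real.log 2 + (1 - 3 / d) * Real.log (32 / 27)) := by
  have hd0 : (0:ℝ) < d := by linarith
  have hg : (0:ℝ) < 2 ^ ((3:ℝ) / 2) * (32 / 27) ^ ((d - 3) / 2) * 2 := by positivity
  rw [← Real.exp_log (Real.rpow_pos_of_pos hg (2/d)), Real.log_rpow hg]
  congr 1
  rw [Real.log_mul (by positivity) (by norm_num), Real.log_mul (by positivity) (by positivity),
    Real.log_rpow (by norm_num), Real.log_rpow (by norm_num)]
  field_simp
  ring

theorem stmt_14 (Q : ℝ → ℝ)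
    (hQ : ∀ d : ℝ, 3 ≤ d →
      Q d = ∫ t in (-1 : ℝ)..0, (1 - t) ^ (d / 2) * (1 - t ^ 2) ^ ((d - 3) / 2)) :
    (∀ d : ℝ, 3 ≤ d → Q d ≤ 2 ^ ((3 : ℝ) / 2) * (32 / 27) ^ ((d - 3) / 2) * 2) ∧
    limsup (fun d : ℝ => Q d ^ (2 / d)) atTop ≤ 32 / 27 := by
  have hbound : ∀ d : ℝ, 3 ≤ d → Q d ≤ 2 ^ ((3 : ℝ) / 2) * (32 / 27) ^ ((d - 3) / 2) * 2 := by
    intro d hd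
    rw [hQ d hd]
    exact stmt_14_main_bound d hd
  refine ⟨hbound, ?_⟩
  have hQnn : ∀ d : ℝ, 3 ≤ d → 0 ≤ Q d := by
    intro d hd
    rw [hQ d hd]
    apply intervalIntegral.integral_nonneg (by norm_num)
    intro u hu
    obtain ⟨hu1, hu0⟩ := hu
    have : (0:ℝ) ≤ 1 - u := by linarith
    have : (0:ℝ) ≤ 1 - u ^ 2 := by nlinarith
    positivity
  have hev : ∀ᶠ d : ℝ in atTop, Q d ^ (2 / d) ≤
      Real.exp ((5 / d) * Real.log 2 + (1 - 3 / d) * Real.log (32 / 27)) := by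
    filter_upwards [eventually_ge_atTop (3:ℝ)] with d hd
    rw [← stmt_14_eq d hd]
    exact Real.rpow_le_rpow (hQnn d hd) (hbound d hd) (by positivity)
  calc limsup (fun d : ℝ => Q d ^ (2 / d)) atTop
      ≤ limsup (fun d : ℝ => Real.exp ((5 / d) * Real.log 2 + (1 - 3 / d) * Real.log (32 / 27)))
          atTop := by
        refine limsup_le_limsup hev ?_ ?_
        · apply isCoboundedUnder_le_of_eventually_le (l := atTop) (x := 0)
          filter_upwards [eventually_ge_atTop (3:ℝ)] with d hd
          exact Real.rpow_nonneg (hQnn d hd) _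
        · exact stmt_14_tendsto.isBoundedUnder_le
    _ = 32 / 27 := stmt_14_tendsto.limsup_eq
end
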